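/- Let U ⊆ ℂ be open and φ : U → ℝ smooth. Define K := −2 e^{−2φ} ∂_z∂_{z̄}φ, Δ_g f := 2 e^{−2φ} ∂_z∂_{z̄} f, and the iterated covariant derivatives K_{;z̄z̄} := ∂_{z̄}²K − 2(∂_{z̄}φ)(∂_{z̄}K), K_{;z̄z̄z} := ∂_z K_{;z̄z̄}, K_{;z̄z̄zz} := ∂_z K_{;z̄z̄z} − 2(∂_zφ) K_{;z̄z̄z}. Then on all of U one has e^{−4φ} K_{;z̄z̄zz} = (1/4) Δ_g(Δ_g K) + (1/4) Δ_g(K²). -/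

import Mathlib

open Complex
open scoped ContDiff

/-- Partial derivative in the `x`-direction (real coordinate). -/
noncomputable def pdx (f : ℂ → ℂ) (z : ℂ) : ℂ := fderiv ℝ f z 1

/-- Partial derivative in the `y`-direction (real coordinate). -/
noncomputable def pdy (f : ℂ → ℂ) (z : ℂ) : ℂ := fderiv ℝ f z Complex.I

/-- Wirtinger derivative `∂_z = (1/2)(∂_x - i ∂_y)`. -/
noncomputable def pdz (f : ℂ → ℂ) (z : ℂ) : ℂ := (1/2) * (pdx f z - Complex.I * pdy f z)

/-- Wirtinger derivative `∂_z̄ = (1/2)(∂_x + i ∂_y)`. -/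
noncomputable def pdzbar (f : ℂ → ℂ) (z : ℂ) : ℂ := (1/2) * (pdx f z + Complex.I * pdy f z)

/-- The complexification of a real-valued function. -/
noncomputable def phiC (φ : ℂ → ℝ) : ℂ → ℂ := fun z => (φ z : ℂ)

/-- The Gauss curvature `K = -2 e^{-2φ} ∂_z ∂_z̄ φ` of the metric `g = 2 e^{2φ} |dz|²`. -/
noncomputable def gaussK (φ : ℂ → ℝ) : ℂ → ℂ := fun z =>
  (-2 : ℂ) * (Real.exp (-2 * φ z) : ℂ) * pdz (pdzbar (phiC φ)) z

/-- The Laplace–Beltrami operator `Δ_g f = 2 e^{-2φ} ∂_z ∂_z̄ f` of `g = 2 e^{2φ} |dz|²`. -/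
noncomputable def lapg (φ : ℂ → ℝ) (f : ℂ → ℂ) : ℂ → ℂ := fun z =>
  (2 : ℂ) * (Real.exp (-2 * φ z) : ℂ) * pdz (pdzbar f) z

/-- Second covariant derivative `K_{;z̄z̄} = ∂_z̄² K - 2 (∂_z̄ φ)(∂_z̄ K)`. -/
noncomputable def Kzb2 (φ : ℂ → ℝ) : ℂ → ℂ := fun z =>
  pdzbar (pdzbar (gaussK φ)) z - 2 * pdzbar (phiC φ) z * pdzbar (gaussK φ) z

/-- Third covariant derivative `K_{;z̄z̄z} = ∂_z K_{;z̄z̄}`. -/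
noncomputable def Kzb2z (φ : ℂ → ℝ) : ℂ → ℂ := fun z => pdz (Kzb2 φ) z

/-- Fourth covariant derivative `K_{;z̄z̄zz} = ∂_z K_{;z̄z̄z} - 2 (∂_z φ) K_{;z̄z̄z}`. -/
noncomputable def Kzb2z2 (φ : ℂ → ℝ) : ℂ → ℂ := fun z =>
  pdz (Kzb2z φ) z - 2 * pdz (phiC φ) z * Kzb2z φ z

/-- The Euclidean Laplacian `Δ = ∂_x² + ∂_y²` on real-valued functions on `ℂ ≅ ℝ²`. -/
noncomputable def lapR (f : ℂ → ℝ) : ℂ → ℝ := fun z =>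
  fderiv ℝ (fun w => fderiv ℝ f w 1) z 1 + fderiv ℝ (fun w => fderiv ℝ f w Complex.I) z Complex.I

noncomputable def Ef (φ : ℂ → ℝ) : ℂ → ℂ := fun z => (Real.exp (-2 * φ z) : ℂ)

namespace ObstructionAux

lemma one_le_inf : (1:WithTop ℕ∞) ≤ ∞ := by
  rw [show ((1:WithTop ℕ∞)) = ((1:ℕ∞):WithTop ℕ∞) by rfl]
  exact WithTop.coe_le_coe.2 le_top

lemma two_le_inf : (2:WithTop ℕ∞) ≤ ∞ := by
  rw [show ((2:WithTop ℕ∞)) = ((2:ℕ∞):WithTop ℕ∞) by rfl]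
  exact WithTop.coe_le_coe.2 le_top

lemma inf_add_one_le : ((∞:WithTop ℕ∞) + 1) ≤ ∞ := le_of_eq rfl

variable {U : Set ℂ} {f g : ℂ → ℂ} {z : ℂ}

lemma pdz_eq (f : ℂ → ℂ) (z : ℂ) :
    pdz f z = 1/2 * (fderiv ℝ f z 1 - Complex.I * fderiv ℝ f z Complex.I) := rfl

lemma pdzbar_eq (f : ℂ → ℂ) (z : ℂ) :
    pdzbar f z = 1/2 * (fderiv ℝ f z 1 + Complex.I * fderiv ℝ f z Complex.I) := rfl

lemma dOn (hU : IsOpen U) (hf : ContDiffOn ℝ ∞ f U) (hz : z ∈ U) :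
    DifferentiableAt ℝ f z :=
  (hf.contDiffAt (hU.mem_nhds hz)).differentiableAt (by simp)

lemma smOn_fderiv (hU : IsOpen U) (hf : ContDiffOn ℝ ∞ f U) (v : ℂ) :
    ContDiffOn ℝ ∞ (fun w => fderiv ℝ f w v) U :=
  (hf.fderiv_of_isOpen hU inf_add_one_le).clm_apply contDiffOn_const

lemma smOn_pdz (hU : IsOpen U) (hf : ContDiffOn ℝ ∞ f U) :
    ContDiffOn ℝ ∞ (pdz f) U := by
  have h : ContDiffOn ℝ ∞
      (fun z => (1/2 : ℂ) * (fderiv ℝ f z 1 - Complex.I * fderiv ℝ f z Complex.I)) U :=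
    contDiffOn_const.mul ((smOn_fderiv hU hf 1).sub
      (contDiffOn_const.mul (smOn_fderiv hU hf Complex.I)))
  exact h

lemma smOn_pdzbar (hU : IsOpen U) (hf : ContDiffOn ℝ ∞ f U) :
    ContDiffOn ℝ ∞ (pdzbar f) U := by
  have h : ContDiffOn ℝ ∞
      (fun z => (1/2 : ℂ) * (fderiv ℝ f z 1 + Complex.I * fderiv ℝ f z Complex.I)) U :=
    contDiffOn_const.mul ((smOn_fderiv hU hf 1).add
      (contDiffOn_const.mul (smOn_fderiv hU hf Complex.I)))
  exact h

lemma pdz_congr (hU : IsOpen U) (h : ∀ w ∈ U, f w = g w) (hz : z ∈ U) :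
    pdz f z = pdz g z := by
  have hfd : fderiv ℝ f z = fderiv ℝ g z :=
    Filter.EventuallyEq.fderiv_eq (Filter.eventually_of_mem (hU.mem_nhds hz) h)
  simp only [pdz_eq, hfd]

lemma pdzbar_congr (hU : IsOpen U) (h : ∀ w ∈ U, f w = g w) (hz : z ∈ U) :
    pdzbar f z = pdzbar g z := by
  have hfd : fderiv ℝ f z = fderiv ℝ g z :=
    Filter.EventuallyEq.fderiv_eq (Filter.eventually_of_mem (hU.mem_nhds hz) h)
  simp only [pdzbar_eq, hfd]

lemma sndderiv_comm (hU : IsOpen U) (hf : ContDiffOn ℝ ∞ f U) (hz : z ∈ U) (u v : ℂ) :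
    fderiv ℝ (fun w => fderiv ℝ f w v) z u = fderiv ℝ (fun w => fderiv ℝ f w u) z v := by
  have hat : ContDiffAt ℝ ∞ f z := hf.contDiffAt (hU.mem_nhds hz)
  have hsymm : IsSymmSndFDerivAt ℝ f z := hat.isSymmSndFDerivAt (by rw [minSmoothness_of_isRCLikeNormedField]; exact two_le_inf)
  have hdf : DifferentiableAt ℝ (fderiv ℝ f) z :=
    (hat.fderiv_right inf_add_one_le).differentiableAt (by simp)
  have key : ∀ v' : ℂ, fderiv ℝ (fun w => fderiv ℝ f w v') z =
      (fderiv ℝ (fderiv ℝ f) z).flip v' := by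
    intro v'
    rw [fderiv_clm_apply hdf (differentiableAt_const v')]
    simp
  rw [key, key]
  exact hsymm u v

lemma pdz_pdzbar_comm (hU : IsOpen U) (hf : ContDiffOn ℝ ∞ f U) (hz : z ∈ U) :
    pdz (pdzbar f) z = pdzbar (pdz f) z := by
  have d1 : DifferentiableAt ℝ (fun w => fderiv ℝ f w 1) z :=
    dOn hU (smOn_fderiv hU hf 1) hz
  have dI : DifferentiableAt ℝ (fun w => fderiv ℝ f w Complex.I) z :=
    dOn hU (smOn_fderiv hU hf Complex.I) hz
  have hbar : HasFDerivAt (pdzbar f)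
      ((1/2 : ℂ) • (fderiv ℝ (fun w => fderiv ℝ f w 1) z +
        Complex.I • fderiv ℝ (fun w => fderiv ℝ f w Complex.I) z)) z := by
    exact ((d1.hasFDerivAt.add (dI.hasFDerivAt.const_mul Complex.I)).const_mul (1/2 : ℂ))
  have hz' : HasFDerivAt (pdz f)
      ((1/2 : ℂ) • (fderiv ℝ (fun w => fderiv ℝ f w 1) z -
        Complex.I • fderiv ℝ (fun w => fderiv ℝ f w Complex.I) z)) z := by
    exact ((d1.hasFDerivAt.sub (dI.hasFDerivAt.const_mul Complex.I)).const_mul (1/2 : ℂ))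
  have hcomm := sndderiv_comm hU hf hz 1 Complex.I
  simp only [pdz_eq, pdzbar_eq, hbar.fderiv, hz'.fderiv, ContinuousLinearMap.smul_apply,
    ContinuousLinearMap.add_apply, ContinuousLinearMap.sub_apply, smul_eq_mul]
  rw [hcomm]
  ring


variable {U : Set ℂ} {f g a b c d e : ℂ → ℂ} {z : ℂ} {φ : ℂ → ℝ}



lemma L1 (da : DifferentiableAt ℝ a z) (db : DifferentiableAt ℝ b z)
    (dc : DifferentiableAt ℝ c z) :
    pdz (fun w => a w - 2 * b w * c w) z
      = pdz a z - 2 * pdz b z * c z - 2 * b z * pdz c z := by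
  have h : HasFDerivAt (fun w => a w - 2 * b w * c w)
      (fderiv ℝ a z - ((2 * b z) • fderiv ℝ c z + c z • ((2:ℂ) • fderiv ℝ b z))) z :=
    da.hasFDerivAt.sub ((db.hasFDerivAt.const_mul (2:ℂ)).mul dc.hasFDerivAt)
  simp only [pdz_eq, h.fderiv, ContinuousLinearMap.sub_apply, ContinuousLinearMap.add_apply,
    ContinuousLinearMap.smul_apply, smul_eq_mul]
  ring

lemma L2 {e' : ℂ → ℂ} (da : DifferentiableAt ℝ a z) (db : DifferentiableAt ℝ b z)
    (dc : DifferentiableAt ℝ c z) (dd : DifferentiableAt ℝ d z)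
    (de : DifferentiableAt ℝ e' z) :
    pdz (fun w => a w - 2 * b w * c w - 2 * d w * e' w) z
      = pdz a z - 2 * pdz b z * c z - 2 * b z * pdz c z
        - 2 * pdz d z * e' z - 2 * d z * pdz e' z := by
  have h : HasFDerivAt (fun w => a w - 2 * b w * c w - 2 * d w * e' w)
      ((fderiv ℝ a z - ((2 * b z) • fderiv ℝ c z + c z • ((2:ℂ) • fderiv ℝ b z)))
        - ((2 * d z) • fderiv ℝ e' z + e' z • ((2:ℂ) • fderiv ℝ d z))) z :=
    (da.hasFDerivAt.sub ((db.hasFDerivAt.const_mul (2:ℂ)).mul dc.hasFDerivAt)).sub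
      ((dd.hasFDerivAt.const_mul (2:ℂ)).mul de.hasFDerivAt)
  simp only [pdz_eq, h.fderiv, ContinuousLinearMap.sub_apply, ContinuousLinearMap.add_apply,
    ContinuousLinearMap.smul_apply, smul_eq_mul]
  ring

lemma L3bar (da : DifferentiableAt ℝ a z) (db : DifferentiableAt ℝ b z) :
    pdzbar (fun w => 2 * a w * b w) z = 2 * pdzbar a z * b z + 2 * a z * pdzbar b z := by
  have h : HasFDerivAt (fun w => 2 * a w * b w)
      ((2 * a z) • fderiv ℝ b z + b z • ((2:ℂ) • fderiv ℝ a z)) z :=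
    (da.hasFDerivAt.const_mul (2:ℂ)).mul db.hasFDerivAt
  simp only [pdzbar_eq, h.fderiv, ContinuousLinearMap.add_apply,
    ContinuousLinearMap.smul_apply, smul_eq_mul]
  ring

lemma L6 (da : DifferentiableAt ℝ a z) (db : DifferentiableAt ℝ b z) :
    pdz (fun w => 2 * a w * b w) z = 2 * pdz a z * b z + 2 * a z * pdz b z := by
  have h : HasFDerivAt (fun w => 2 * a w * b w)
      ((2 * a z) • fderiv ℝ b z + b z • ((2:ℂ) • fderiv ℝ a z)) z :=
    (da.hasFDerivAt.const_mul (2:ℂ)).mul db.hasFDerivAt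
  simp only [pdz_eq, h.fderiv, ContinuousLinearMap.add_apply,
    ContinuousLinearMap.smul_apply, smul_eq_mul]
  ring

lemma L7 (da : DifferentiableAt ℝ a z) (db : DifferentiableAt ℝ b z) :
    pdz (fun w => -2 * a w * b w) z = -2 * pdz a z * b z - 2 * a z * pdz b z := by
  have h : HasFDerivAt (fun w => -2 * a w * b w)
      ((-2 * a z) • fderiv ℝ b z + b z • ((-2:ℂ) • fderiv ℝ a z)) z :=
    (da.hasFDerivAt.const_mul (-2:ℂ)).mul db.hasFDerivAt
  simp only [pdz_eq, h.fderiv, ContinuousLinearMap.add_apply,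
    ContinuousLinearMap.smul_apply, smul_eq_mul]
  ring

lemma L4 {e' : ℂ → ℂ} (da : DifferentiableAt ℝ a z) (db : DifferentiableAt ℝ b z)
    (dc : DifferentiableAt ℝ c z) (dd : DifferentiableAt ℝ d z)
    (de : DifferentiableAt ℝ e' z) :
    pdz (fun w => -4 * a w * b w * c w + 2 * d w * e' w) z
      = -4 * pdz a z * b z * c z - 4 * a z * pdz b z * c z - 4 * a z * b z * pdz c z
        + 2 * pdz d z * e' z + 2 * d z * pdz e' z := by
  have h : HasFDerivAt (fun w => -4 * a w * b w * c w + 2 * d w * e' w)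
      (((-4 * a z * b z) • fderiv ℝ c z
          + c z • ((-4 * a z) • fderiv ℝ b z + b z • ((-4:ℂ) • fderiv ℝ a z)))
        + ((2 * d z) • fderiv ℝ e' z + e' z • ((2:ℂ) • fderiv ℝ d z))) z :=
    (((da.hasFDerivAt.const_mul (-4:ℂ)).mul db.hasFDerivAt).mul dc.hasFDerivAt).add
      ((dd.hasFDerivAt.const_mul (2:ℂ)).mul de.hasFDerivAt)
  simp only [pdz_eq, h.fderiv, ContinuousLinearMap.add_apply,
    ContinuousLinearMap.smul_apply, smul_eq_mul]
  ring

lemma L5bar (da : DifferentiableAt ℝ a z) :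
    pdzbar (fun w => a w * a w) z = 2 * a z * pdzbar a z := by
  have h : HasFDerivAt (fun w => a w * a w)
      (a z • fderiv ℝ a z + a z • fderiv ℝ a z) z :=
    da.hasFDerivAt.mul da.hasFDerivAt
  simp only [pdzbar_eq, h.fderiv, ContinuousLinearMap.add_apply,
    ContinuousLinearMap.smul_apply, smul_eq_mul]
  ring

lemma Ef_eq (φ : ℂ → ℝ) : Ef φ = fun w => Complex.exp ((-2 : ℂ) * phiC φ w) := by
  funext w
  simp only [Ef, phiC]
  rw [show ((-2:ℂ) * (φ w:ℂ)) = ((-2 * φ w : ℝ) : ℂ) by push_cast; ring, ← Complex.ofReal_exp]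

lemma smOn_phiC (hφ : ContDiffOn ℝ ∞ φ U) : ContDiffOn ℝ ∞ (phiC φ) U := by
  have h : ContDiffOn ℝ ∞ (fun z => Complex.ofRealCLM (φ z)) U :=
    Complex.ofRealCLM.contDiff.comp_contDiffOn hφ
  have heq : (fun z => Complex.ofRealCLM (φ z)) = phiC φ := by
    funext z; simp [phiC]
  rwa [heq] at h

lemma smOn_Ef (hφ : ContDiffOn ℝ ∞ φ U) : ContDiffOn ℝ ∞ (Ef φ) U := by
  rw [Ef_eq]
  exact Complex.contDiff_exp.comp_contDiffOn (contDiffOn_const.mul (smOn_phiC hφ))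

lemma hasFDerivAt_Ef (dφC : DifferentiableAt ℝ (phiC φ) z) :
    HasFDerivAt (Ef φ) ((Ef φ z * (-2:ℂ)) • fderiv ℝ (phiC φ) z) z := by
  have h1 : HasFDerivAt (fun w => (-2:ℂ) * phiC φ w) ((-2:ℂ) • fderiv ℝ (phiC φ) z) z :=
    dφC.hasFDerivAt.const_mul (-2:ℂ)
  have h2 := h1.cexp
  have h2' : HasFDerivAt (fun w => Complex.exp ((-2:ℂ) * phiC φ w))
      ((Complex.exp ((-2:ℂ) * phiC φ z) * (-2:ℂ)) • fderiv ℝ (phiC φ) z) z := by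
    have h3 := h2
    rwa [smul_smul] at h3
  rw [Ef_eq]
  have hval : (Complex.exp ((-2:ℂ) * phiC φ z) * (-2:ℂ))
      = ((fun w => Complex.exp ((-2 : ℂ) * phiC φ w)) z * (-2:ℂ)) := rfl
  exact h2'

lemma pdz_Ef (dφC : DifferentiableAt ℝ (phiC φ) z) :
    pdz (Ef φ) z = -2 * pdz (phiC φ) z * Ef φ z := by
  have h := hasFDerivAt_Ef dφC
  simp only [pdz_eq, h.fderiv, ContinuousLinearMap.smul_apply, smul_eq_mul]
  ring

lemma pdzbar_Ef (dφC : DifferentiableAt ℝ (phiC φ) z) :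
    pdzbar (Ef φ) z = -2 * pdzbar (phiC φ) z * Ef φ z := by
  have h := hasFDerivAt_Ef dφC
  simp only [pdzbar_eq, h.fderiv, ContinuousLinearMap.smul_apply, smul_eq_mul]
  ring


end ObstructionAux

open ObstructionAux in
/-- Lemma 4.3 of the paper: for smooth real `φ` on open `U ⊆ ℂ`, with
`K = -2 e^{-2φ} ∂_z∂_z̄ φ`, one has `e^{-4φ} K_{;z̄z̄zz} = (1/4) Δ_g² K + (1/4) Δ_g K²` on `U`. -/
theorem obstruction_identity (U : Set ℂ) (hU : IsOpen U) (φ : ℂ → ℝ)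
    (hφ : ContDiffOn ℝ ∞ φ U) :
    ∀ z ∈ U,
      (Real.exp (-4 * φ z) : ℂ) * Kzb2z2 φ z
        = (1/4) * lapg φ (lapg φ (gaussK φ)) z
            + (1/4) * lapg φ (fun w => (gaussK φ w) ^ 2) z := by
  intro z hz
  -- smoothness facts
  have sφC : ContDiffOn ℝ ∞ (phiC φ) U := smOn_phiC hφ
  have sE : ContDiffOn ℝ ∞ (Ef φ) U := smOn_Ef hφ
  have sQ : ContDiffOn ℝ ∞ (pdzbar (phiC φ)) U := smOn_pdzbar hU sφC
  have sM11 : ContDiffOn ℝ ∞ (pdz (pdzbar (phiC φ))) U := smOn_pdz hU sQ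
  have sK : ContDiffOn ℝ ∞ (gaussK φ) U := by
    have h : ContDiffOn ℝ ∞ (fun w => (-2:ℂ) * Ef φ w * pdz (pdzbar (phiC φ)) w) U :=
      (contDiffOn_const.mul sE).mul sM11
    exact h
  have sN01 : ContDiffOn ℝ ∞ (pdzbar (gaussK φ)) U := smOn_pdzbar hU sK
  have sN02 : ContDiffOn ℝ ∞ (pdzbar (pdzbar (gaussK φ))) U := smOn_pdzbar hU sN01
  have sN11 : ContDiffOn ℝ ∞ (pdz (pdzbar (gaussK φ))) U := smOn_pdz hU sN01
  have sN12 : ContDiffOn ℝ ∞ (pdz (pdzbar (pdzbar (gaussK φ)))) U := smOn_pdz hU sN02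
  -- derivative rules for the conformal factor
  have hEp : ∀ w ∈ U, pdz (Ef φ) w = -2 * pdz (phiC φ) w * Ef φ w :=
    fun w hw => pdz_Ef (dOn hU sφC hw)
  have hEq : ∀ w ∈ U, pdzbar (Ef φ) w = -2 * pdzbar (phiC φ) w * Ef φ w :=
    fun w hw => pdzbar_Ef (dOn hU sφC hw)
  -- the only commutation of derivatives we need
  have cN11 : ∀ w ∈ U,
      pdzbar (pdz (pdzbar (gaussK φ))) w = pdz (pdzbar (pdzbar (gaussK φ))) w :=
    fun w hw => (pdz_pdzbar_comm hU sN01 hw).symm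
  -- LHS expansions
  have e1 : ∀ w ∈ U, Kzb2z φ w
      = pdz (pdzbar (pdzbar (gaussK φ))) w
        - 2 * pdz (pdzbar (phiC φ)) w * pdzbar (gaussK φ) w
        - 2 * pdzbar (phiC φ) w * pdz (pdzbar (gaussK φ)) w := by
    intro w hw
    exact L1 (dOn hU sN02 hw) (dOn hU sQ hw) (dOn hU sN01 hw)
  have e2 : pdz (Kzb2z φ) z
      = pdz (pdz (pdzbar (pdzbar (gaussK φ)))) z
        - 2 * pdz (pdz (pdzbar (phiC φ))) z * pdzbar (gaussK φ) z
        - 2 * pdz (pdzbar (phiC φ)) z * pdz (pdzbar (gaussK φ)) z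
        - 2 * pdz (pdzbar (phiC φ)) z * pdz (pdzbar (gaussK φ)) z
        - 2 * pdzbar (phiC φ) z * pdz (pdz (pdzbar (gaussK φ))) z := by
    rw [pdz_congr hU e1 hz]
    exact L2 (dOn hU sN12 hz) (dOn hU sM11 hz) (dOn hU sN01 hz)
      (dOn hU sQ hz) (dOn hU sN11 hz)
  -- RHS expansions
  have r1 : ∀ w ∈ U, pdzbar (lapg φ (gaussK φ)) w
      = -4 * pdzbar (phiC φ) w * Ef φ w * pdz (pdzbar (gaussK φ)) w
        + 2 * Ef φ w * pdz (pdzbar (pdzbar (gaussK φ))) w := by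
    intro w hw
    have h : pdzbar (lapg φ (gaussK φ)) w
        = 2 * pdzbar (Ef φ) w * pdz (pdzbar (gaussK φ)) w
          + 2 * Ef φ w * pdzbar (pdz (pdzbar (gaussK φ))) w :=
      L3bar (dOn hU sE hw) (dOn hU sN11 hw)
    rw [h, hEq w hw, cN11 w hw]
    ring
  have hr2b : pdz (pdzbar (lapg φ (gaussK φ))) z
      = -4 * pdz (pdzbar (phiC φ)) z * Ef φ z * pdz (pdzbar (gaussK φ)) z
        - 4 * pdzbar (phiC φ) z * pdz (Ef φ) z * pdz (pdzbar (gaussK φ)) z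
        - 4 * pdzbar (phiC φ) z * Ef φ z * pdz (pdz (pdzbar (gaussK φ))) z
        + 2 * pdz (Ef φ) z * pdz (pdzbar (pdzbar (gaussK φ))) z
        + 2 * Ef φ z * pdz (pdz (pdzbar (pdzbar (gaussK φ)))) z := by
    rw [pdz_congr hU r1 hz]
    exact L4 (dOn hU sQ hz) (dOn hU sE hz) (dOn hU sN11 hz)
      (dOn hU sE hz) (dOn hU sN12 hz)
  have hr2 : lapg φ (lapg φ (gaussK φ)) z
      = 2 * Ef φ z * pdz (pdzbar (lapg φ (gaussK φ))) z := rfl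
  have r3 : ∀ w ∈ U, pdzbar (fun t => gaussK φ t ^ 2) w
      = 2 * gaussK φ w * pdzbar (gaussK φ) w := by
    intro w hw
    have hsq : pdzbar (fun t => gaussK φ t ^ 2) w
        = pdzbar (fun t => gaussK φ t * gaussK φ t) w := by
      have : (fun t => gaussK φ t ^ 2) = (fun t => gaussK φ t * gaussK φ t) := by
        funext t; ring
      rw [this]
    rw [hsq]
    exact L5bar (dOn hU sK hw)
  have hr4b : pdz (pdzbar (fun t => gaussK φ t ^ 2)) z
      = 2 * pdz (gaussK φ) z * pdzbar (gaussK φ) z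
        + 2 * gaussK φ z * pdz (pdzbar (gaussK φ)) z := by
    rw [pdz_congr hU r3 hz]
    exact L6 (dOn hU sK hz) (dOn hU sN01 hz)
  have hr4 : lapg φ (fun w => gaussK φ w ^ 2) z
      = 2 * Ef φ z * pdz (pdzbar (fun t => gaussK φ t ^ 2)) z := rfl
  -- relation between ∂_z K and φ-derivatives
  have hKz : pdz (gaussK φ) z
      = 4 * pdz (phiC φ) z * Ef φ z * pdz (pdzbar (phiC φ)) z
        - 2 * Ef φ z * pdz (pdz (pdzbar (phiC φ))) z := by
    have h : pdz (gaussK φ) z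
        = -2 * pdz (Ef φ) z * pdz (pdzbar (phiC φ)) z
          - 2 * Ef φ z * pdz (pdz (pdzbar (phiC φ))) z :=
      L7 (dOn hU sE hz) (dOn hU sM11 hz)
    rw [h, hEp z hz]
    ring
  have hKdef : gaussK φ z = -2 * Ef φ z * pdz (pdzbar (phiC φ)) z := rfl
  have hK4 : Kzb2z2 φ z = pdz (Kzb2z φ) z - 2 * pdz (phiC φ) z * Kzb2z φ z := rfl
  have hexp4 : (Real.exp (-4 * φ z) : ℂ) = Ef φ z * Ef φ z := by
    have h : (-4 * φ z) = (-2 * φ z) + (-2 * φ z) := by ring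
    simp only [Ef, ← Complex.ofReal_mul, ← Real.exp_add, h]
  rw [hexp4, hK4, e2, e1 z hz, hr2, hr2b, hr4, hr4b, hEp z hz, hKdef]
  linear_combination (-(Ef φ z) * pdzbar (gaussK φ) z) * hKz
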